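/- For any cyclic permutation (i,j,k) of (1,2,3) one has e_i·e_j ∈ U₁ e_k and e_j·e_i = −(e_i·e_j). Moreover there exists u ∈ U₁ such that, setting σ = σ_{(1,1,1,u)} (coordinatewise multiplication by (1,1,1,u)), the multiplication x ⋆ y = σ⁻¹(σ(x)·σ(y)) satisfies e_i ⋆ e_j = e_k = −(e_j ⋆ e_i) for every cyclic permutation (i,j,k) of (1,2,3), retains the Lagrange identity, the identity element e₀ and the property (a e₀) ⋆ y = a y, and σ : (E,⋆) → (E,·) is an isomorphism of unital A₀-algebras. -/

import Mathlib

open LaurentPolynomial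

/-- `A = ℤ[z, z⁻¹]`, the Laurent polynomial ring over the integers. -/
abbrev A : Type := LaurentPolynomial ℤ

/-- The conjugation `f(z) ↦ f(z⁻¹)` on `A`. -/
noncomputable def conj : A →+* A := (LaurentPolynomial.invert (R := ℤ)).toRingEquiv.toRingHom

/-- The fixed subring `A₀ = {f ∈ A | f* = f}`. -/
noncomputable def A0 : Subring A := RingHom.eqLocus conj (RingHom.id A)

/-- `E = A⁴`. -/
abbrev E : Type := Fin 4 → A

/-- The norm `N(x) = ∑ₖ xₖ xₖ*`. -/
noncomputable def N (x : E) : A := ∑ k, x k * conj (x k)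

/-- The standard `A`-basis vectors of `E = A⁴`. -/
noncomputable def e (k : Fin 4) : E := Pi.single k 1

/-- Yang's multiplication `x ∘ y = (p, q, r, s)`. -/
noncomputable def yang (x y : E) : E :=
  ![x 0 * y 0 - x 1 * conj (y 1) - x 2 * conj (y 2) - x 3 * conj (y 3),
    x 0 * y 1 + x 1 * conj (y 0) + conj (x 2) * conj (y 3) - conj (x 3) * conj (y 2),
    x 0 * y 2 - conj (x 1) * conj (y 3) + x 2 * conj (y 0) + conj (x 3) * conj (y 1),
    x 0 * y 3 + conj (x 1) * conj (y 2) - conj (x 2) * conj (y 1) + x 3 * conj (y 0)]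

/-- `(i,j,k)` is a cyclic permutation of `(1,2,3)`. -/
def Cyc (i j k : Fin 4) : Prop :=
  (i, j, k) = (1, 2, 3) ∨ (i, j, k) = (2, 3, 1) ∨ (i, j, k) = (3, 1, 2)

def ct (f : A) (n : ℤ) : ℤ := f.coeff n

lemma conj_apply (f : A) (n : ℤ) : (conj f).coeff n = f.coeff (-n) := invert_apply f n
lemma conj_conj (a : A) : conj (conj a) = a := involutive_invert a

lemma ct_mul_conj (f : A) : (f * conj f).coeff 0 = ∑ n ∈ f.coeff.support, (f.coeff n)^2 := by
  rw [AddMonoidAlgebra.coeff_mul, Finsupp.sum]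
  apply Finset.sum_congr rfl
  intro a ha
  rw [Finsupp.sum]
  rw [Finset.sum_congr rfl (fun a₂ _ => show (if a + a₂ = 0 then f.coeff a * (conj f).coeff a₂ else 0)
      = if a₂ = -a then f.coeff a * (conj f).coeff a₂ else 0 from if_congr (by omega) rfl rfl)]
  rw [Finset.sum_ite_eq' (conj f).coeff.support (-a) (fun a₂ => f.coeff a * (conj f).coeff a₂)]
  have h2 : (conj f).coeff (-a) = f.coeff a := by rw [conj_apply, neg_neg]
  have hmem : -a ∈ (conj f).coeff.support := by
    rw [Finsupp.mem_support_iff, h2]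
    exact Finsupp.mem_support_iff.mp ha
  rw [if_pos hmem, h2, sq]

lemma N_ct (x : E) : (N x).coeff 0 = ∑ k : Fin 4, ∑ n ∈ (x k).coeff.support, ((x k).coeff n)^2 := by
  rw [N, AddMonoidAlgebra.coeff_sum, Finsupp.finset_sum_apply]
  exact Finset.sum_congr rfl (fun k _ => ct_mul_conj (x k))

lemma one_ct : (1:A).coeff 0 = 1 := by
  rw [AddMonoidAlgebra.one_def]; exact Finsupp.single_eq_same

lemma smul_e_apply (u : A) (k j : Fin 4) : (u • e k) j = if j = k then u else 0 := by
  simp [e, Pi.single_apply]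

lemma norm_one_classify (x : E) (h : N x = 1) :
    ∃ (k : Fin 4) (u : A), u * conj u = 1 ∧ u + conj u ≠ 0 ∧ x = u • e k := by
  have h0 : ∑ k : Fin 4, ∑ n ∈ (x k).coeff.support, ((x k).coeff n)^2 = 1 := by
    rw [← N_ct, h, one_ct]
  set S : Fin 4 → ℤ := fun k => ∑ n ∈ (x k).coeff.support, ((x k).coeff n)^2 with hS
  have hSnn : ∀ k, 0 ≤ S k := fun k => Finset.sum_nonneg (fun n _ => sq_nonneg _)
  obtain ⟨k, hk⟩ : ∃ k, S k ≠ 0 := by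
    by_contra hc; push_neg at hc
    have : (1:ℤ) = 0 := by rw [← h0]; exact Finset.sum_eq_zero (fun k _ => hc k)
    omega
  have hle : S k ≤ 1 := h0 ▸ Finset.single_le_sum (fun j _ => hSnn j) (Finset.mem_univ k)
  have hk1 : S k = 1 := by have := hSnn k; omega
  have hrest : ∀ j, j ≠ k → S j = 0 := by
    intro j hj
    have hsum : ∑ t ∈ Finset.univ.erase k, S t = 0 := by
      have h0' : ∑ t ∈ Finset.univ.erase k, S t + S k = 1 := by
        rw [Finset.sum_erase_add _ _ (Finset.mem_univ k)]; exact h0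
      omega
    exact (Finset.sum_eq_zero_iff_of_nonneg (fun t _ => hSnn t)).mp hsum j
      (Finset.mem_erase.mpr ⟨hj, Finset.mem_univ j⟩)
  have hxj : ∀ j, j ≠ k → x j = 0 := by
    intro j hj
    have hz := (Finset.sum_eq_zero_iff_of_nonneg (fun n _ => sq_nonneg ((x j).coeff n))).mp (hrest j hj)
    rw [← AddMonoidAlgebra.coeff_eq_zero, ← Finsupp.support_eq_empty]
    apply Finset.eq_empty_iff_forall_notMem.mpr
    intro n hn
    exact (Finsupp.mem_support_iff.mp hn) ((pow_eq_zero_iff two_ne_zero).mp (hz n hn))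
  obtain ⟨m, hm⟩ : ∃ m, m ∈ (x k).coeff.support := by
    by_contra hc; push_neg at hc
    have hemp : (x k).coeff.support = ∅ := Finset.eq_empty_iff_forall_notMem.mpr hc
    rw [hS] at hk1
    simp only [hemp, Finset.sum_empty] at hk1
    omega
  set c := (x k).coeff m with hcdef
  have hc : c ≠ 0 := Finsupp.mem_support_iff.mp hm
  have hle2 : c^2 ≤ S k := Finset.single_le_sum (f := fun n => ((x k).coeff n)^2) (fun n _ => sq_nonneg _) hm
  have hc1 : c^2 = 1 := by rcases lt_trichotomy c 0 with h'|h'|h' <;> [nlinarith; exact absurd h' hc; nlinarith]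
  have hcc : c = 1 ∨ c = -1 := Int.isUnit_iff.mp (IsUnit.of_mul_eq_one (a := c) c (by nlinarith))
  have hsupp : (x k).coeff.support = {m} := by
    apply Finset.eq_singleton_iff_unique_mem.mpr ⟨hm, ?_⟩
    intro n hn
    by_contra hne
    have hsub : ({n, m} : Finset ℤ) ⊆ (x k).coeff.support := by
      intro t ht; simp at ht; rcases ht with rfl|rfl <;> assumption
    have h2 : ((x k).coeff n)^2 + c^2 ≤ S k := by
      calc ((x k).coeff n)^2 + c^2 = ∑ t ∈ ({n, m} : Finset ℤ), ((x k).coeff t)^2 := by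
            rw [Finset.sum_insert (by simp [hne]), Finset.sum_singleton]
        _ ≤ S k := Finset.sum_le_sum_of_subset_of_nonneg hsub (fun t _ _ => sq_nonneg _)
    have hn0 : (x k).coeff n ≠ 0 := Finsupp.mem_support_iff.mp hn
    rcases lt_trichotomy ((x k).coeff n) 0 with h'|h'|h' <;> [nlinarith; exact hn0 h'; nlinarith]
  have hxk : x k = AddMonoidAlgebra.single m c := by
    apply AddMonoidAlgebra.coeff_injective
    ext n
    rw [AddMonoidAlgebra.coeff_single]
    by_cases hn : n = m
    · subst hn; rw [Finsupp.single_eq_same]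
    · rw [Finsupp.single_eq_of_ne' (fun hh => hn hh.symm)]
      apply Finsupp.notMem_support_iff.mp
      rw [hsupp]; simpa using hn
  have hsingle : (AddMonoidAlgebra.single m c : A) = C c * T m := single_eq_C_mul_T c m
  have hconju : conj (C c * T m) = C c * T (-m) := by
    show invert (C c * T m) = _
    rw [map_mul, invert_C, invert_T]
  refine ⟨k, C c * T m, ?_, ?_, ?_⟩
  · rw [hconju, mul_mul_mul_comm, ← T_add, add_neg_cancel, T_zero, mul_one, ← map_mul]
    have : c * c = 1 := by nlinarith
    rw [this, map_one]
  · intro hzero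
    have happ : ct (C c * T m + conj (C c * T m)) m = 0 := by rw [hzero]; rfl
    rw [hconju] at happ
    have key : ct (C c * T m + C c * T (-m)) m = c + (if -m = m then c else 0) := by
      rw [← hsingle, ← (single_eq_C_mul_T c (-m))]
      show (AddMonoidAlgebra.single m c).coeff m + (AddMonoidAlgebra.single (-m) c).coeff m = _
      rw [AddMonoidAlgebra.coeff_single, AddMonoidAlgebra.coeff_single, Finsupp.single_eq_same, Finsupp.single_apply]
    rw [key] at happ
    split at happ <;> rcases hcc with hcc|hcc <;> omega
  · funext j
    rw [smul_e_apply]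
    by_cases hj : j = k
    · rw [if_pos hj, hj, hxk, hsingle]
    · rw [if_neg hj]; exact hxj j hj
noncomputable def B (x y : E) : A := ∑ k, (x k * conj (y k) + conj (x k) * y k)
noncomputable def Tr (x : E) : A := x 0 + conj (x 0)

lemma Npol (x y : E) : N (x + y) = N x + N y + B x y := by
  simp only [N, B, Pi.add_apply, map_add, ← Finset.sum_add_distrib]
  exact Finset.sum_congr rfl fun k _ => by ring

lemma Bsymm (x y : E) : B x y = B y x := by
  simp only [B]; exact Finset.sum_congr rfl fun k _ => by ring

lemma Badd_l (x y z : E) : B (x + y) z = B x z + B y z := by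
  simp only [B, Pi.add_apply, map_add, ← Finset.sum_add_distrib]
  exact Finset.sum_congr rfl fun k _ => by ring

lemma Badd_r (x y z : E) : B x (y + z) = B x y + B x z := by
  rw [Bsymm, Badd_l, Bsymm y x, Bsymm z x]

lemma Bsub_l (x y z : E) : B (x - y) z = B x z - B y z := by
  simp only [B, Pi.sub_apply, map_sub, ← Finset.sum_sub_distrib]
  exact Finset.sum_congr rfl fun k _ => by ring

lemma Bsmul_l (a : A) (ha : conj a = a) (x z : E) : B (a • x) z = a * B x z := by
  simp only [B, Pi.smul_apply, smul_eq_mul, map_mul, ha, Finset.mul_sum]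
  exact Finset.sum_congr rfl fun k _ => by ring

lemma conj_N (x : E) : conj (N x) = N x := by
  simp only [N, map_sum, map_mul, conj_conj]
  exact Finset.sum_congr rfl fun k _ => by ring

lemma conj_Tr (x : E) : conj (Tr x) = Tr x := by
  simp only [Tr, map_add, conj_conj]; ring

lemma Tr_add (x y : E) : Tr (x + y) = Tr x + Tr y := by
  simp only [Tr, Pi.add_apply, map_add]; ring

lemma B_smul_e_r (v : E) (a : A) (k : Fin 4) :
    B v (a • e k) = v k * conj a + conj (v k) * a := by
  rw [B, Finset.sum_eq_single_of_mem k (Finset.mem_univ k)]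
  · rw [smul_e_apply, if_pos rfl]
  · intro j _ hj
    rw [smul_e_apply, if_neg hj, map_zero, mul_zero, mul_zero, add_zero]

lemma B_e0 (x : E) : B x (e 0) = Tr x := by
  have h := B_smul_e_r x 1 0
  rw [one_smul] at h
  rw [h, map_one, mul_one, mul_one, Tr]

lemma B_e (i j : Fin 4) : B (e i) (e j) = if i = j then 2 else 0 := by
  have h := B_smul_e_r (e i) 1 j
  rw [one_smul] at h
  rw [h, map_one, mul_one, mul_one]
  by_cases hij : i = j
  · subst hij
    rw [if_pos rfl, show e i i = 1 from Pi.single_eq_same i 1, map_one]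
    norm_num
  · rw [if_neg hij, show e i j = 0 from Pi.single_eq_of_ne (fun h' => hij h'.symm) 1,
      map_zero, add_zero]

lemma B_usmul_e (a : A) (m l : Fin 4) :
    B (a • e m) (e l) = if m = l then a + conj a else 0 := by
  have h := B_smul_e_r (a • e m) 1 l
  rw [one_smul] at h
  rw [h, map_one, mul_one, mul_one, smul_e_apply]
  by_cases hlm : l = m
  · rw [if_pos hlm, if_pos hlm.symm]
  · rw [if_neg hlm, if_neg (fun h' => hlm h'.symm), map_zero, add_zero]

lemma N_e (i : Fin 4) : N (e i) = 1 := by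
  rw [N, Finset.sum_eq_single_of_mem i (Finset.mem_univ i)]
  · rw [show e i i = 1 from Pi.single_eq_same i 1, map_one, mul_one]
  · intro j _ hj
    rw [show e i j = 0 from Pi.single_eq_of_ne hj 1, map_zero, mul_zero]

lemma Tr_e (i : Fin 4) (hi : i ≠ 0) : Tr (e i) = 0 := by
  rw [Tr, show e i 0 = 0 from Pi.single_eq_of_ne (Ne.symm hi) 1, map_zero, add_zero]

lemma conj_T' (n : ℤ) : conj (T n) = T (-n) := invert_T n

lemma nondeg (w : E) (h : ∀ z : E, B w z = 0) : w = 0 := by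
  funext k
  have h1 := h ((1 : A) • e k)
  rw [B_smul_e_r, map_one, mul_one, mul_one] at h1
  have h2 := h ((T 1 : A) • e k)
  rw [B_smul_e_r, conj_T'] at h2
  have h3 : conj (w k) * (T 1 - T (-1)) = 0 := by linear_combination h2 - T (-1) * h1
  have hT : (T 1 - T (-1) : A) ≠ 0 := by
    intro hh
    have heq : (T 1 : A) = T (-1) := sub_eq_zero.mp hh
    have h5 : ct (T 1) 1 = ct (T (-1)) 1 := by rw [heq]
    rw [show ct (T 1) 1 = 1 from Finsupp.single_eq_same,
      show ct (T (-1)) (1:ℤ) = 0 from Finsupp.single_eq_of_ne (by decide)] at h5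
    exact one_ne_zero h5
  have h4 : conj (w k) = 0 := by
    rcases mul_eq_zero.mp h3 with h' | h'
    · exact h'
    · exact absurd h' hT
  have : w k = 0 := by
    have := conj_conj (w k)
    rw [h4, map_zero] at this
    exact this.symm
  simpa using this

section MulLemmas

variable (mul : E →ₗ[A0] E →ₗ[A0] E)

lemma mul_add_l (x z y : E) : mul (x + z) y = mul x y + mul z y := by
  rw [map_add, LinearMap.add_apply]

lemma mul_add_r (x y w : E) : mul x (y + w) = mul x y + mul x w := map_add (mul x) y w

lemma mul_neg_l (x y : E) : mul (-x) y = -(mul x y) := by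
  rw [map_neg, LinearMap.neg_apply]

variable (hL : ∀ x y : E, N (mul x y) = N x * N y)
include hL

lemma hB1' (x y w : E) : B (mul x y) (mul x w) = N x * B y w := by
  have h := hL x (y + w)
  rw [mul_add_r, Npol, Npol, hL x y, hL x w] at h
  linear_combination h

lemma hB1 (x z y : E) : B (mul x y) (mul z y) = B x z * N y := by
  have h := hL (x + z) y
  rw [mul_add_l, Npol, Npol, hL x y, hL z y] at h
  linear_combination h

lemma hB2 (x y z w : E) :
    B (mul x y) (mul z w) + B (mul x w) (mul z y) = B x z * B y w := by
  have h := hB1' mul hL (x + z) y w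
  rw [mul_add_l, mul_add_l, Badd_l, Badd_r, Badd_r, Npol,
    hB1' mul hL x y w, hB1' mul hL z y w] at h
  have hs := Bsymm (mul z y) (mul x w)
  linear_combination h - hs

variable (hid : ∀ x : E, mul (e 0) x = x ∧ mul x (e 0) = x)
include hid

lemma adj (x Y w : E) : B (mul x Y) w + B (mul x w) Y = Tr x * B Y w := by
  have h := hB2 mul hL x Y (e 0) w
  rwa [(hid w).1, (hid Y).1, B_e0] at h

lemma adjr (Y x w : E) : B (mul Y x) w + B Y (mul w x) = B Y w * Tr x := by
  have h := hB2 mul hL Y x w (e 0)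
  rwa [(hid Y).2, (hid w).2, B_e0] at h

lemma B_mul_e0 (x y : E) : B (mul x y) (e 0) = Tr x * Tr y - B x y := by
  have h := hB2 mul hL x y (e 0) (e 0)
  rw [(hid (e 0)).1, (hid x).2, (hid y).1] at h
  rw [B_e0, B_e0, B_e0] at h
  rw [B_e0]
  linear_combination h

lemma sq_id (x : E) : mul x x = Tr x • x - N x • e 0 := by
  have key : ∀ w : E, B (mul x x - (Tr x • x - N x • e 0)) w = 0 := by
    intro w
    rw [Bsub_l, Bsub_l, Bsmul_l _ (conj_Tr x), Bsmul_l _ (conj_N x)]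
    have h1 := adj mul hL hid x x w
    have h2 : B (mul x w) x = N x * B w (e 0) := by
      have h := hB1' mul hL x w (e 0)
      rwa [(hid x).2] at h
    have h4 := Bsymm (e 0) w
    rw [B_e0] at h4
    rw [B_e0] at h2
    linear_combination h1 - h2 + N x * h4
  exact sub_eq_zero.mp (nondeg _ key)

lemma sq_e (l : Fin 4) (hl : l ≠ 0) : mul (e l) (e l) = -e 0 := by
  rw [sq_id mul hL hid, Tr_e l hl, N_e, zero_smul, one_smul, zero_sub]

lemma anticomm (i j : Fin 4) (hi : i ≠ 0) (hj : j ≠ 0) (hij : i ≠ j) :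
    mul (e j) (e i) = -mul (e i) (e j) := by
  have h := sq_id mul hL hid (e i + e j)
  rw [mul_add_l, mul_add_r, mul_add_r, sq_e mul hL hid i hi, sq_e mul hL hid j hj,
    Tr_add, Tr_e i hi, Tr_e j hj, Npol, N_e, N_e, B_e, if_neg hij] at h
  have h' : mul (e i) (e j) + mul (e j) (e i) = 0 := by
    have e0eq : ((1:A) + 1 + 0) • (e 0 : E) = e 0 + e 0 := by
      rw [add_zero, add_smul, one_smul]
    rw [e0eq, show ((0:A) + 0) = 0 from add_zero 0, zero_smul] at h
    linear_combination h
  exact eq_neg_of_add_eq_zero_right h'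

lemma alt_l (i : Fin 4) (hi : i ≠ 0) (y : E) : mul (e i) (mul (e i) y) = -y := by
  have key : ∀ w : E, B (mul (e i) (mul (e i) y) + y) w = 0 := by
    intro w
    have h1 := adj mul hL hid (e i) (mul (e i) y) w
    have h2 := hB1' mul hL (e i) w y
    rw [N_e] at h2
    rw [Tr_e i hi, zero_mul] at h1
    have h3 := Bsymm w y
    rw [Badd_l]
    linear_combination h1 - h2 - h3
  exact eq_neg_of_add_eq_zero_left (nondeg _ key)

lemma alt_r (i : Fin 4) (hi : i ≠ 0) (y : E) : mul (mul y (e i)) (e i) = -y := by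
  have key : ∀ w : E, B (mul (mul y (e i)) (e i) + y) w = 0 := by
    intro w
    have h1 := adjr mul hL hid (mul y (e i)) (e i) w
    have h2 := hB1 mul hL y w (e i)
    rw [N_e] at h2
    rw [Tr_e i hi, mul_zero] at h1
    rw [Badd_l]
    linear_combination h1 - h2
  exact eq_neg_of_add_eq_zero_left (nondeg _ key)

lemma part1_core (i j k : Fin 4) (hi : i ≠ 0) (hj : j ≠ 0) (hij : i ≠ j)
    (hk : ∀ m : Fin 4, m ≠ 0 → m ≠ i → m ≠ j → m = k) :
    (∃ u : A, u * conj u = 1 ∧ mul (e i) (e j) = u • e k) ∧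
      mul (e j) (e i) = -mul (e i) (e j) := by
  refine ⟨?_, anticomm mul hL hid i j hi hj hij⟩
  have hN1 : N (mul (e i) (e j)) = 1 := by rw [hL, N_e, N_e, one_mul]
  obtain ⟨m, u, huu, hune, hx⟩ := norm_one_classify _ hN1
  have hB0 : B (mul (e i) (e j)) (e 0) = 0 := by
    rw [B_mul_e0 mul hL hid, Tr_e i hi, zero_mul, B_e, if_neg hij, zero_sub, neg_zero]
  have hBi : B (mul (e i) (e j)) (e i) = 0 := by
    have h := hB1' mul hL (e i) (e j) (e 0)
    rw [(hid (e i)).2] at h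
    rw [h, B_e0, Tr_e j hj, mul_zero]
  have hBj : B (mul (e i) (e j)) (e j) = 0 := by
    have h := hB1 mul hL (e i) (e 0) (e j)
    rw [(hid (e j)).1] at h
    rw [h, B_e0, Tr_e i hi, zero_mul]
  rw [hx, B_usmul_e] at hB0 hBi hBj
  have hm0 : m ≠ 0 := fun h' => hune (by rwa [if_pos h'] at hB0)
  have hmi : m ≠ i := fun h' => hune (by rwa [if_pos h'] at hBi)
  have hmj : m ≠ j := fun h' => hune (by rwa [if_pos h'] at hBj)
  exact ⟨u, huu, by rw [hx, hk m hm0 hmi hmj]⟩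

end MulLemmas

lemma update3_smul (v a : A) (x : E) :
    Function.update (a • x) 3 (v * (a • x) 3) = a • Function.update x 3 (v * x 3) := by
  funext i
  by_cases hi : i = 3
  · subst hi
    simp only [Function.update_self, Pi.smul_apply, smul_eq_mul]
    ring
  · rw [Function.update_of_ne hi, Pi.smul_apply, Pi.smul_apply, Function.update_of_ne hi]

lemma update3_add (v : A) (x y : E) :
    Function.update (x + y) 3 (v * (x + y) 3) =
      Function.update x 3 (v * x 3) + Function.update y 3 (v * y 3) := by
  funext i
  by_cases hi : i = 3
  · subst hi; simp [mul_add]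
  · simp [Function.update_of_ne hi]

lemma update3_neg (v : A) (x : E) :
    Function.update (-x) 3 (v * (-x) 3) = -Function.update x 3 (v * x 3) := by
  funext i
  by_cases hi : i = 3
  · subst hi; simp
  · simp [Function.update_of_ne hi]

lemma update3_e (v : A) (k : Fin 4) (hk : k ≠ 3) :
    Function.update (e k) 3 (v * e k 3) = e k := by
  have h3 : e k 3 = 0 := Pi.single_eq_of_ne (Ne.symm hk) 1
  rw [h3, mul_zero, ← h3, Function.update_eq_self]

lemma update3_e3 (v : A) : Function.update (e 3) 3 (v * e 3 3) = v • e 3 := by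
  funext i
  by_cases hi : i = 3
  · subst hi
    rw [Function.update_self, smul_e_apply, if_pos rfl,
      show (e 3 3 : A) = 1 from Pi.single_eq_same 3 1, mul_one]
  · rw [Function.update_of_ne hi, smul_e_apply, if_neg hi,
      show (e 3 i : A) = 0 from Pi.single_eq_of_ne hi 1]

lemma N_update3 (v : A) (hv : v * conj v = 1) (x : E) :
    N (Function.update x 3 (v * x 3)) = N x := by
  rw [N, N, Fin.sum_univ_four, Fin.sum_univ_four, Function.update_self,
    Function.update_of_ne (show (0 : Fin 4) ≠ 3 by decide),
    Function.update_of_ne (show (1 : Fin 4) ≠ 3 by decide),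
    Function.update_of_ne (show (2 : Fin 4) ≠ 3 by decide), map_mul]
  linear_combination (x 3 * conj (x 3)) * hv

lemma cyc_cases {i j k : Fin 4} (h : Cyc i j k) :
    (i = 1 ∧ j = 2 ∧ k = 3) ∨ (i = 2 ∧ j = 3 ∧ k = 1) ∨ (i = 3 ∧ j = 1 ∧ k = 2) := by
  rcases h with h | h | h
  · left; simp only [Prod.mk.injEq] at h; exact ⟨h.1, h.2.1, h.2.2⟩
  · right; left; simp only [Prod.mk.injEq] at h; exact ⟨h.1, h.2.1, h.2.2⟩
  · right; right; simp only [Prod.mk.injEq] at h; exact ⟨h.1, h.2.1, h.2.2⟩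

/-- Lemma 4.7: for each cyclic permutation `(i,j,k)` of `(1,2,3)`,
`eᵢ·eⱼ ∈ U₁ eₖ` and `eⱼ·eᵢ = −(eᵢ·eⱼ)`.  Moreover there is `u ∈ U₁` such that,
with `σ = σ_{(1,1,1,u)}`, the multiplication `x ⋆ y = σ⁻¹(σ(x)·σ(y))` satisfies
`eᵢ ⋆ eⱼ = eₖ = −(eⱼ ⋆ eᵢ)` for every cyclic permutation `(i,j,k)` of `(1,2,3)`,
retains the Lagrange identity, the identity element `e₀` and the property
`(a e₀) ⋆ y = a y`, and `σ : (E,⋆) → (E,·)` is an isomorphism of unital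
`A₀`-algebras. -/
theorem quaternion_relations_lemma (mul : E →ₗ[A0] E →ₗ[A0] E)
    (hL : ∀ x y : E, N (mul x y) = N x * N y)
    (hid : ∀ x : E, mul (e 0) x = x ∧ mul x (e 0) = x)
    (hA : ∀ (a : A) (y : E), mul (a • e 0) y = a • y) :
    (∀ i j k : Fin 4, Cyc i j k →
      (∃ u : A, u * conj u = 1 ∧ mul (e i) (e j) = u • e k) ∧
      mul (e j) (e i) = -mul (e i) (e j)) ∧
    ∃ u : A, u * conj u = 1 ∧
      ∀ (σ σinv : E → E) (star : E → E → E),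
        σ = (fun x : E => Function.update x 3 (u * x 3)) →
        σinv = (fun x : E => Function.update x 3 (conj u * x 3)) →
        star = (fun x y : E => σinv (mul (σ x) (σ y))) →
        σinv ∘ σ = id ∧ σ ∘ σinv = id ∧
        (∀ i j k : Fin 4, Cyc i j k →
          star (e i) (e j) = e k ∧ star (e j) (e i) = -e k) ∧
        (∀ x y : E, N (star x y) = N x * N y) ∧
        (∀ x : E, star (e 0) x = x ∧ star x (e 0) = x) ∧
        (∀ (a : A) (y : E), star (a • e 0) y = a • y) ∧
        -- `σ : (E,⋆) → (E,·)` is an isomorphism of unital `A₀`-algebras: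
        Function.Bijective σ ∧
        (∀ x y : E, σ (x + y) = σ x + σ y) ∧
        (∀ (c : A0) (x : E), σ (c • x) = c • σ x) ∧
        σ (e 0) = e 0 ∧
        (∀ x y : E, σ (star x y) = mul (σ x) (σ y)) := by
  constructor
  · intro i j k hc
    rcases cyc_cases hc with ⟨rfl, rfl, rfl⟩ | ⟨rfl, rfl, rfl⟩ | ⟨rfl, rfl, rfl⟩
    · exact part1_core mul hL hid 1 2 3 (by decide) (by decide) (by decide) (by decide)
    · exact part1_core mul hL hid 2 3 1 (by decide) (by decide) (by decide) (by decide)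
    · exact part1_core mul hL hid 3 1 2 (by decide) (by decide) (by decide) (by decide)
  · obtain ⟨⟨u, huu, h12⟩, h21⟩ :=
      part1_core mul hL hid 1 2 3 (by decide) (by decide) (by decide) (by decide)
    refine ⟨u, huu, ?_⟩
    intro σ σinv star hσ hσinv hstar
    have hcu : conj u * u = 1 := by rw [mul_comm]; exact huu
    have hcu2 : conj u * conj (conj u) = 1 := by rw [conj_conj, mul_comm]; exact huu
    have hσσ : ∀ x : E, Function.update (Function.update x 3 (u * x 3)) 3
        (conj u * (Function.update x 3 (u * x 3)) 3) = x := by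
      intro x
      rw [Function.update_self, Function.update_idem, ← mul_assoc, hcu, one_mul,
        Function.update_eq_self]
    have hσσ' : ∀ x : E, Function.update (Function.update x 3 (conj u * x 3)) 3
        (u * (Function.update x 3 (conj u * x 3)) 3) = x := by
      intro x
      rw [Function.update_self, Function.update_idem, ← mul_assoc, huu, one_mul,
        Function.update_eq_self]
    have h12n : mul (e 1) (e 2) = -(mul (e 2) (e 1)) := by rw [h21, neg_neg]
    have p21 : mul (e 2) (e 1) = -(u • e 3) := by rw [h21, h12]
    have p23 : mul (e 2) (u • e 3) = e 1 := by
      rw [← h12, h12n, map_neg, alt_l mul hL hid 2 (by decide) (e 1), neg_neg]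
    have p32 : mul (u • e 3) (e 2) = -e 1 := by
      rw [← h12, alt_r mul hL hid 2 (by decide) (e 1)]
    have p31 : mul (u • e 3) (e 1) = e 2 := by
      rw [← h12, h12n, mul_neg_l, alt_r mul hL hid 1 (by decide) (e 2), neg_neg]
    have p13 : mul (e 1) (u • e 3) = -e 2 := by
      rw [← h12, alt_l mul hL hid 1 (by decide) (e 2)]
    have hτu3 : Function.update (u • e 3) 3 (conj u * (u • e 3) 3) = e 3 := by
      rw [update3_smul, update3_e3, smul_smul, huu, one_smul]
    refine ⟨?_, ?_, ?_, ?_, ?_, ?_, ?_, ?_, ?_, ?_, ?_⟩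
    · funext x
      simp only [Function.comp_apply, hσ, hσinv, id_eq]
      exact hσσ x
    · funext x
      simp only [Function.comp_apply, hσ, hσinv, id_eq]
      exact hσσ' x
    · intro i j k hc
      rcases cyc_cases hc with ⟨rfl, rfl, rfl⟩ | ⟨rfl, rfl, rfl⟩ | ⟨rfl, rfl, rfl⟩
      · constructor
        · simp only [hstar, hσ, hσinv]
          rw [update3_e u 1 (by decide), update3_e u 2 (by decide), h12]
          exact hτu3
        · simp only [hstar, hσ, hσinv]
          rw [update3_e u 2 (by decide), update3_e u 1 (by decide), p21, update3_neg, hτu3]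
      · constructor
        · simp only [hstar, hσ, hσinv]
          rw [update3_e u 2 (by decide), update3_e3 u, p23]
          exact update3_e (conj u) 1 (by decide)
        · simp only [hstar, hσ, hσinv]
          rw [update3_e3 u, update3_e u 2 (by decide), p32, update3_neg,
            update3_e (conj u) 1 (by decide)]
      · constructor
        · simp only [hstar, hσ, hσinv]
          rw [update3_e3 u, update3_e u 1 (by decide), p31]
          exact update3_e (conj u) 2 (by decide)
        · simp only [hstar, hσ, hσinv]
          rw [update3_e u 1 (by decide), update3_e3 u, p13, update3_neg,
            update3_e (conj u) 2 (by decide)]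
    · intro x y
      simp only [hstar, hσ, hσinv]
      rw [N_update3 (conj u) hcu2, hL, N_update3 u huu, N_update3 u huu]
    · intro x
      constructor
      · simp only [hstar, hσ, hσinv]
        rw [update3_e u 0 (by decide), (hid (Function.update x 3 (u * x 3))).1]
        exact hσσ x
      · simp only [hstar, hσ, hσinv]
        rw [update3_e u 0 (by decide), (hid (Function.update x 3 (u * x 3))).2]
        exact hσσ x
    · intro a y
      simp only [hstar, hσ, hσinv]
      rw [update3_smul, update3_e u 0 (by decide), hA, update3_smul, hσσ y]
    · refine Function.bijective_iff_has_inverse.mpr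
        ⟨(fun x : E => Function.update x 3 (conj u * x 3)), fun x => ?_, fun x => ?_⟩
      · simp only [hσ]
        exact hσσ x
      · simp only [hσ]
        exact hσσ' x
    · intro x y
      simp only [hσ]
      exact update3_add u x y
    · intro c x
      simp only [hσ]
      exact update3_smul u (c : A) x
    · simp only [hσ]
      exact update3_e u 0 (by decide)
    · intro x y
      simp only [hstar, hσ, hσinv]
      exact hσσ' (mul (Function.update x 3 (u * x 3)) (Function.update y 3 (u * y 3)))
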